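/- For integers u, c ∈ {1,…,N} with u ≠ c, define the penalty P_u(s) = Σ_{a : |a−u|=1, 1≤a≤N} ReLU(⟨p_a − p_u, s⟩) where p_v = (v,v²). Then P_u(r_c) ≥ 1 for r_c = (2c,−1), while P_c(r_c) = 0. Moreover, if u maximizes a ↦ ⟨p_a, s⟩ over {1,…,N}, then P_u(s) = 0. -/

import Mathlib

open scoped RealInnerProductSpace

noncomputable section

abbrev E2 := EuclideanSpace ℝ (Fin 2)

def momentPt (v : ℤ) : E2 := (WithLp.equiv 2 (Fin 2 → ℝ)).symm ![(v : ℝ), (v : ℝ) ^ 2]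

def exposeDir (c : ℤ) : E2 := (WithLp.equiv 2 (Fin 2 → ℝ)).symm ![2 * (c : ℝ), -1]

/-- The local ReLU penalty `P_u(s) = Σ_{a : |a−u|=1, 1≤a≤N} ReLU(⟪p_a − p_u, s⟫)`. -/
def penalty (N : ℤ) (u : ℤ) (s : E2) : ℝ :=
  ∑ a ∈ (Finset.Icc 1 N).filter (fun a => |a - u| = 1),
    max ⟪momentPt a - momentPt u, s⟫ 0

lemma inner_key (a u c : ℤ) :
    ⟪momentPt a - momentPt u, exposeDir c⟫ =
      ((a : ℝ) - u) * (2 * c - a - u) := by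
  simp [momentPt, exposeDir, PiLp.inner_apply, Fin.sum_univ_two, WithLp.equiv_symm_apply, PiLp.toLp_apply]
  ring

theorem penalty_separation (N : ℤ) (hN : 2 ≤ N)
    (u c : ℤ) (hu : u ∈ Finset.Icc 1 N) (hc : c ∈ Finset.Icc 1 N) :
    (u ≠ c → 1 ≤ penalty N u (exposeDir c)) ∧
    penalty N c (exposeDir c) = 0 ∧
    (∀ s : E2, (∀ a ∈ Finset.Icc 1 N, ⟪momentPt a, s⟫ ≤ ⟪momentPt u, s⟫) →
      penalty N u s = 0) := by
  simp only [Finset.mem_Icc] at hu hc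
  refine ⟨?_, ?_, ?_⟩
  · intro hne
    rcases lt_or_gt_of_ne hne with h | h
    · -- u < c, take a = u + 1
      have hmem : (u + 1) ∈ (Finset.Icc 1 N).filter (fun a => |a - u| = 1) := by
        simp [Finset.mem_Icc]
        omega
      have hterm : (1 : ℝ) ≤ max ⟪momentPt (u+1) - momentPt u, exposeDir c⟫ 0 := by
        rw [inner_key]
        have : (1 : ℝ) ≤ ((u:ℝ) + 1 - u) * (2 * c - (u+1) - u) := by
          push_cast
          nlinarith [show (u : ℝ) + 1 ≤ c by exact_mod_cast h]
        calc (1:ℝ) ≤ ((u:ℝ)+1 - u) * (2*c - (u+1) - u) := this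
          _ ≤ max _ 0 := by push_cast; exact le_max_left _ _
      calc (1:ℝ) ≤ max ⟪momentPt (u+1) - momentPt u, exposeDir c⟫ 0 := hterm
        _ ≤ penalty N u (exposeDir c) := by
          unfold penalty
          exact Finset.single_le_sum (f := fun a => max ⟪momentPt a - momentPt u, exposeDir c⟫ 0) (fun a _ => le_max_right _ _) hmem
    · -- u > c, take a = u - 1
      have hmem : (u - 1) ∈ (Finset.Icc 1 N).filter (fun a => |a - u| = 1) := by
        simp [Finset.mem_Icc]
        omega
      have hterm : (1 : ℝ) ≤ max ⟪momentPt (u-1) - momentPt u, exposeDir c⟫ 0 := by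
        rw [inner_key]
        have : (1 : ℝ) ≤ ((u:ℝ) - 1 - u) * (2 * c - (u-1) - u) := by
          push_cast
          nlinarith [show (c : ℝ) + 1 ≤ u by exact_mod_cast h]
        calc (1:ℝ) ≤ ((u:ℝ)-1 - u) * (2*c - (u-1) - u) := this
          _ ≤ max _ 0 := by push_cast; exact le_max_left _ _
      calc (1:ℝ) ≤ max ⟪momentPt (u-1) - momentPt u, exposeDir c⟫ 0 := hterm
        _ ≤ penalty N u (exposeDir c) := by
          unfold penalty
          exact Finset.single_le_sum (f := fun a => max ⟪momentPt a - momentPt u, exposeDir c⟫ 0) (fun a _ => le_max_right _ _) hmem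
  · apply Finset.sum_eq_zero
    intro a ha
    rw [inner_key, max_eq_right]
    nlinarith [sq_nonneg ((a:ℝ) - c)]
  · intro s hs
    apply Finset.sum_eq_zero
    intro a ha
    simp only [Finset.mem_filter, Finset.mem_Icc] at ha
    rw [inner_sub_left, max_eq_right]
    have := hs a (Finset.mem_Icc.mpr ⟨ha.1.1, ha.1.2⟩)
    linarith
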